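/- Let (Ω, 𝔉, P) be a probability space equipped with a filtration (𝔉_i)_{i∈ℕ}, and let (X_i)_{i∈ℕ} be a real-valued process adapted to (𝔉_i), with each X_i integrable. Let a be a real number and c ≥ 0 a real number such that, almost surely, for every i ≥ 0: E[X_{i+1} | 𝔉_i] ≤ X_i + a and |X_{i+1} − X_i| ≤ c. Then for every integer t ≥ 1 and every real j ≥ 0: P(X_t − X_0 ≥ t·a + j) ≤ exp(−j² / (2t(c + |a|)²)). -/

import Mathlib

open MeasureTheory

private lemma exp_convex_bound {b lam d : ℝ} (hb : 0 < b) (hd : |d| ≤ b) :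
    Real.exp (lam * d) ≤ (Real.exp (lam * b) + Real.exp (-(lam * b))) / 2
      + (Real.exp (lam * b) - Real.exp (-(lam * b))) / (2 * b) * d := by
  obtain ⟨hd1, hd2⟩ := abs_le.1 hd
  have hw1 : (0:ℝ) ≤ (b - d) / (2 * b) := div_nonneg (by linarith) (by linarith)
  have hw2 : (0:ℝ) ≤ (b + d) / (2 * b) := div_nonneg (by linarith) (by linarith)
  have hsum : (b - d) / (2 * b) + (b + d) / (2 * b) = 1 := by field_simp; ring
  have key := convexOn_exp.2 (Set.mem_univ (-(lam * b))) (Set.mem_univ (lam * b)) hw1 hw2 hsum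
  simp only [smul_eq_mul] at key
  have e1 : (b - d) / (2 * b) * (-(lam * b)) + (b + d) / (2 * b) * (lam * b) = lam * d := by
    field_simp; ring
  rw [e1] at key
  have e2 : (b - d) / (2 * b) * Real.exp (-(lam * b)) + (b + d) / (2 * b) * Real.exp (lam * b)
      = (Real.exp (lam * b) + Real.exp (-(lam * b))) / 2
      + (Real.exp (lam * b) - Real.exp (-(lam * b))) / (2 * b) * d := by
    field_simp; ring
  linarith

theorem stmt15 {Ω : Type*} [m0 : MeasurableSpace Ω]
    (P : Measure Ω) [IsProbabilityMeasure P]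
    (ℱ : Filtration ℕ m0)
    (X : ℕ → Ω → ℝ)
    (hadapted : Adapted ℱ X)
    (hint : ∀ i : ℕ, Integrable (X i) P)
    (a c : ℝ) (hc : 0 ≤ c)
    (hdrift : ∀ i : ℕ, ∀ᵐ ω ∂P, (P[X (i + 1)|ℱ i]) ω ≤ X i ω + a)
    (hbdd : ∀ i : ℕ, ∀ᵐ ω ∂P, |X (i + 1) ω - X i ω| ≤ c)
    (t : ℕ) (ht : 1 ≤ t) (j : ℝ) (hj : 0 ≤ j) :
    (P {ω | (t : ℝ) * a + j ≤ X t ω - X 0 ω}).toReal ≤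
      Real.exp (-(j ^ 2) / (2 * t * (c + |a|) ^ 2)) := by
  have hone : (P {ω | (t : ℝ) * a + j ≤ X t ω - X 0 ω}).toReal ≤ 1 := by
    simpa using ENNReal.toReal_mono ENNReal.one_ne_top (prob_le_one (μ := P))
  set b : ℝ := c + |a| with hbdef
  have hb0 : 0 ≤ b := by positivity
  by_cases hdeg : j = 0 ∨ b = 0
  · have : Real.exp (-(j ^ 2) / (2 * ↑t * b ^ 2)) = 1 := by
      rcases hdeg with h | h <;> simp [h]
    rw [this]; exact hone
  push_neg at hdeg
  have hjpos : 0 < j := lt_of_le_of_ne hj (Ne.symm hdeg.1)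
  have hbpos : 0 < b := lt_of_le_of_ne hb0 (Ne.symm hdeg.2)
  have ht0 : (0:ℝ) < t := by exact_mod_cast Nat.lt_of_lt_of_le Nat.zero_lt_one ht
  set lam : ℝ := j / (t * b ^ 2) with hlamdef
  have hlam : 0 < lam := div_pos hjpos (by positivity)
  set D : ℕ → Ω → ℝ := fun i ω => X (i + 1) ω - X i ω - a with hD
  set S : ℕ → Ω → ℝ := fun n ω => X n ω - X 0 ω - n * a with hS
  have hXsm : ∀ n, StronglyMeasurable (X n) := fun n => ((hadapted n).mono (ℱ.le n) le_rfl).stronglyMeasurable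
  have hDsm : ∀ i, StronglyMeasurable (D i) := fun i =>
    ((hXsm (i + 1)).sub (hXsm i)).sub stronglyMeasurable_const
  have hSsmF : ∀ n, StronglyMeasurable[ℱ n] (S n) := fun n =>
    ((hadapted n).sub ((hadapted 0).mono (ℱ.mono (Nat.zero_le n)) le_rfl)).stronglyMeasurable.sub stronglyMeasurable_const
  have hSsm : ∀ n, StronglyMeasurable (S n) := fun n => (hSsmF n).mono (ℱ.le n)
  have hD_bdd : ∀ i, ∀ᵐ ω ∂P, |D i ω| ≤ b := by
    intro i
    filter_upwards [hbdd i] with ω h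
    obtain ⟨h1, h2⟩ := abs_le.1 h
    have ha1 := le_abs_self a
    have ha2 := neg_abs_le a
    rw [abs_le]
    refine ⟨?_, ?_⟩ <;> simp only [hD, hbdef] <;> linarith
  have hD_int : ∀ i, Integrable (D i) P := fun i =>
    ((hint (i + 1)).sub (hint i)).sub (integrable_const a)
  have hexpD_int : ∀ i, Integrable (fun ω => Real.exp (lam * D i ω)) P := by
    intro i
    refine Integrable.mono' (integrable_const (Real.exp (lam * b)))
      ((Real.continuous_exp.comp_stronglyMeasurable ((hDsm i).const_mul lam)).aestronglyMeasurable)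
      ?_
    filter_upwards [hD_bdd i] with ω h
    rw [Real.norm_eq_abs, abs_of_pos (Real.exp_pos _)]
    exact Real.exp_le_exp.2 (mul_le_mul_of_nonneg_left ((abs_le.1 h).2) hlam.le)
  have hS_bdd : ∀ n, ∀ᵐ ω ∂P, |S n ω| ≤ n * b := by
    intro n
    induction n with
    | zero => filter_upwards with ω; simp [hS]
    | succ n ih =>
      filter_upwards [ih, hD_bdd n] with ω h1 h2
      obtain ⟨h3, h4⟩ := abs_le.1 h1
      obtain ⟨h5, h6⟩ := abs_le.1 h2
      rw [abs_le]
      refine ⟨?_, ?_⟩ <;> simp only [hS, hD] at * <;> push_cast <;> linarith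
  have hexpS_int : ∀ n, Integrable (fun ω => Real.exp (lam * S n ω)) P := by
    intro n
    refine Integrable.mono' (integrable_const (Real.exp (lam * (n * b))))
      ((Real.continuous_exp.comp_stronglyMeasurable ((hSsm n).const_mul lam)).aestronglyMeasurable)
      ?_
    filter_upwards [hS_bdd n] with ω h
    rw [Real.norm_eq_abs, abs_of_pos (Real.exp_pos _)]
    exact Real.exp_le_exp.2 (mul_le_mul_of_nonneg_left ((abs_le.1 h).2) hlam.le)
  set K : ℝ := Real.exp (lam ^ 2 * b ^ 2 / 2) with hK
  -- conditional Hoeffding bound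
  have hcond : ∀ i, ∀ᵐ ω ∂P, (P[fun ω => Real.exp (lam * D i ω)|ℱ i]) ω ≤ K := by
    intro i
    set A : ℝ := (Real.exp (lam * b) + Real.exp (-(lam * b))) / 2 with hA
    set B : ℝ := (Real.exp (lam * b) - Real.exp (-(lam * b))) / (2 * b) with hB
    have hB0 : 0 ≤ B := by
      apply div_nonneg _ (by positivity)
      rw [sub_nonneg]
      exact Real.exp_le_exp.2 (by nlinarith)
    have hAK : A ≤ K := by
      have h1 := Real.cosh_le_exp_half_sq (lam * b)
      rw [Real.cosh_eq] at h1
      rw [hA, hK]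
      convert h1 using 3
      ring
    have hh_int : Integrable (fun ω => A + B * D i ω) P :=
      (integrable_const A).add ((hD_int i).const_mul B)
    have hge : (fun ω => Real.exp (lam * D i ω)) ≤ᵐ[P] fun ω => A + B * D i ω := by
      filter_upwards [hD_bdd i] with ω h
      have := exp_convex_bound (b := b) (lam := lam) hbpos h
      rw [← hA, ← hB] at this
      linarith [this]
    have hmono := condExp_mono (m := ℱ i) (hexpD_int i) hh_int hge
    have heq : (fun ω => A + B * D i ω) = (fun _ => A) + B • D i := by
      funext ω; simp [smul_eq_mul]
    have hcondh : P[fun ω => A + B * D i ω|ℱ i]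
        =ᵐ[P] fun ω => A + B * (P[D i|ℱ i]) ω := by
      rw [heq]
      refine (condExp_add (integrable_const A) ((hD_int i).smul B) (ℱ i)).trans ?_
      have h1 : P[(fun _ => A : Ω → ℝ)|ℱ i] = fun _ => A := condExp_const (ℱ.le i) A
      have h2 := condExp_smul (μ := P) (m := ℱ i) B (D i)
      filter_upwards [h2] with ω hω
      simp only [Pi.add_apply, h1, hω, Pi.smul_apply, smul_eq_mul]
    have hDcond : ∀ᵐ ω ∂P, (P[D i|ℱ i]) ω ≤ 0 := by
      have heq2 : D i = X (i + 1) - (X i + fun _ => a) := by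
        funext ω; simp [hD]; ring
      have h3 : P[D i|ℱ i] =ᵐ[P] P[X (i + 1)|ℱ i] - P[X i + fun _ => a|ℱ i] := by
        rw [heq2]
        exact condExp_sub (hint (i + 1)) ((hint i).add (integrable_const a)) (ℱ i)
      have h4 : P[X i + (fun _ => a)|ℱ i] = X i + fun _ => a :=
        condExp_of_stronglyMeasurable (ℱ.le i)
          ((hadapted i).stronglyMeasurable.add stronglyMeasurable_const) ((hint i).add (integrable_const a))
      filter_upwards [h3, hdrift i] with ω h5 h6
      rw [h5, Pi.sub_apply, h4, Pi.add_apply]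
      simpa using sub_nonpos.2 h6
    filter_upwards [hmono, hcondh, hDcond] with ω h1 h2 h3
    calc (P[fun ω => Real.exp (lam * D i ω)|ℱ i]) ω
        ≤ (P[fun ω => A + B * D i ω|ℱ i]) ω := h1
      _ = A + B * (P[D i|ℱ i]) ω := h2
      _ ≤ A + B * 0 := by nlinarith
      _ ≤ K := by simpa using hAK
  -- induction for the mgf bound
  have key : ∀ n : ℕ, ∫ ω, Real.exp (lam * S n ω) ∂P ≤ Real.exp (n * (lam ^ 2 * b ^ 2 / 2)) := by
    intro n
    induction n with
    | zero =>
      have h0 : (fun ω => Real.exp (lam * S 0 ω)) = fun _ => 1 := by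
        funext ω; simp [hS]
      rw [h0, integral_const]
      simp
    | succ n ih =>
      set f : Ω → ℝ := fun ω => Real.exp (lam * S n ω) with hf
      set g : Ω → ℝ := fun ω => Real.exp (lam * D n ω) with hg
      have hsplit : (fun ω => Real.exp (lam * S (n + 1) ω)) = f * g := by
        funext ω
        rw [Pi.mul_apply, hf, hg, ← Real.exp_add]
        congr 1
        simp only [hS, hD]
        push_cast
        ring
      have hfg_int : Integrable (f * g) P := by rw [← hsplit]; exact hexpS_int (n + 1)
      have hfF : StronglyMeasurable[ℱ n] f :=
        Real.continuous_exp.comp_stronglyMeasurable ((hSsmF n).const_mul lam)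
      have hpull := condExp_mul_of_stronglyMeasurable_left hfF hfg_int (hexpD_int n)
      calc ∫ ω, Real.exp (lam * S (n + 1) ω) ∂P
          = ∫ ω, (f * g) ω ∂P := by rw [hsplit]
        _ = ∫ ω, (P[f * g|ℱ n]) ω ∂P := (integral_condExp (ℱ.le n)).symm
        _ ≤ ∫ ω, K * f ω ∂P := by
            refine integral_mono_ae integrable_condExp ((hexpS_int n).const_mul K) ?_
            filter_upwards [hpull, hcond n] with ω h1 h2
            rw [h1, Pi.mul_apply]
            calc f ω * (P[g|ℱ n]) ω ≤ f ω * K :=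
                mul_le_mul_of_nonneg_left h2 (Real.exp_pos _).le
              _ = K * f ω := mul_comm _ _
        _ = K * ∫ ω, f ω ∂P := integral_const_mul K f
        _ ≤ K * Real.exp (n * (lam ^ 2 * b ^ 2 / 2)) :=
            mul_le_mul_of_nonneg_left ih (Real.exp_pos _).le
        _ = Real.exp ((n + 1 : ℕ) * (lam ^ 2 * b ^ 2 / 2)) := by
            rw [hK, ← Real.exp_add]
            congr 1
            push_cast
            ring
  -- Chernoff bound
  have hsetEq : {ω | (t : ℝ) * a + j ≤ X t ω - X 0 ω} = {ω | j ≤ S t ω} := by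
    ext ω
    simp only [Set.mem_setOf_eq, hS]
    constructor <;> intro <;> linarith
  have hchern := ProbabilityTheory.measure_ge_le_exp_mul_mgf (X := S t) (μ := P) (t := lam) j
    hlam.le (hexpS_int t)
  rw [hsetEq]
  refine hchern.trans ?_
  have hmgf : ProbabilityTheory.mgf (S t) P lam = ∫ ω, Real.exp (lam * S t ω) ∂P := rfl
  calc Real.exp (-lam * j) * ProbabilityTheory.mgf (S t) P lam
      ≤ Real.exp (-lam * j) * Real.exp (t * (lam ^ 2 * b ^ 2 / 2)) := by
        rw [hmgf]
        exact mul_le_mul_of_nonneg_left (key t) (Real.exp_pos _).le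
    _ = Real.exp (-lam * j + t * (lam ^ 2 * b ^ 2 / 2)) := (Real.exp_add _ _).symm
    _ = Real.exp (-(j ^ 2) / (2 * t * b ^ 2)) := by
        congr 1
        rw [hlamdef]
        field_simp
        ring
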